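/- Let f ∈ k[x₁,…,xₙ] and let δ = Σᵢ Pᵢ ∂/∂xᵢ be a derivation with coefficients Pᵢ ∈ k[x₁,…,xₙ]. Let f^h and δ^h denote homogenizations with respect to a new variable x₀ (where δ^h has each coefficient Pᵢ homogenized to a common degree and coefficient 0 on ∂/∂x₀). Then δ(f) is a polynomial multiple of f if and only if δ^h(f^h) is a polynomial multiple of f^h. -/

import Mathlib

open MvPolynomial

/-- Homogenization of `f ∈ k[x₁,…,xₙ]` to degree `d` in the new variable `x₀`
(variable `0` of `Fin (n+1)`; the old variables embed via `Fin.succ`). -/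
noncomputable def homog {k : Type*} [CommRing k] {n : ℕ} (d : ℕ)
    (f : MvPolynomial (Fin n) k) : MvPolynomial (Fin (n + 1)) k :=
  (AddMonoidAlgebra.coeff f).sum fun m c =>
    MvPolynomial.monomial
      (Finsupp.mapDomain Fin.succ m + Finsupp.single 0 (d - m.sum fun _ e => e)) c

namespace St1
variable {k : Type*} [CommRing k] {n : ℕ} {N : ℕ}

noncomputable def S (d : ℕ) (v : Fin n →₀ ℕ) : Fin (n+1) →₀ ℕ :=
  Finsupp.mapDomain Fin.succ v + Finsupp.single 0 (d - v.sum fun _ e => e)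

noncomputable def T (u : Fin (n+1) →₀ ℕ) : Fin n →₀ ℕ :=
  Finsupp.equivFunOnFinite.symm (fun i => u i.succ)

lemma T_apply (u : Fin (n+1) →₀ ℕ) (i : Fin n) : T u i = u i.succ := rfl

lemma homog_eq (d : ℕ) (f : MvPolynomial (Fin n) k) :
    homog d f = AddMonoidAlgebra.ofCoeff (Finsupp.mapDomain (S d) (AddMonoidAlgebra.coeff f)) := by
  rw [Finsupp.mapDomain, homog, AddMonoidAlgebra.ofCoeff_finsuppSum]; rfl

lemma S_apply_succ (d : ℕ) (v : Fin n →₀ ℕ) (i : Fin n) : S d v i.succ = v i := by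
  simp [S, Finsupp.mapDomain_apply (Fin.succ_injective n), Finsupp.single_apply,
    (Fin.succ_ne_zero i).symm]

lemma S_apply_zero (d : ℕ) (v : Fin n →₀ ℕ) : S d v 0 = d - v.sum fun _ e => e := by
  rw [S, Finsupp.add_apply, Finsupp.mapDomain_notin_range]
  · simp
  · rintro ⟨i, hi⟩; exact Fin.succ_ne_zero i hi

lemma T_S (d : ℕ) (v : Fin n →₀ ℕ) : T (S d v) = v := by ext i; rw [T_apply, S_apply_succ]

lemma S_injective (d : ℕ) : Function.Injective (S (n := n) d) :=
  Function.LeftInverse.injective (T_S d)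

lemma sum_split (u : Fin (n+1) →₀ ℕ) :
    (u.sum fun _ e => e) = u 0 + (T u).sum fun _ e => e := by
  rw [Finsupp.sum_fintype _ _ (fun _ => rfl), Finsupp.sum_fintype _ _ (fun _ => rfl),
    Fin.sum_univ_succ]; rfl

lemma S_T {m : ℕ} {u : Fin (n+1) →₀ ℕ} (h : (u.sum fun _ e => e) = m) : S m (T u) = u := by
  ext j
  refine Fin.cases ?_ (fun i => ?_) j
  · rw [S_apply_zero]; have h2 := sum_split u; omega
  · rw [S_apply_succ, T_apply]

noncomputable def phi : MvPolynomial (Fin (n+1)) k →ₐ[k] MvPolynomial (Fin n) k :=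
  aeval (Fin.cases 1 X)

lemma phi_monomial (u : Fin (n+1) →₀ ℕ) (c : k) :
    phi (monomial u c) = monomial (T u) c := by
  rw [phi, aeval_monomial, monomial_eq]
  congr 1
  rw [Finsupp.prod_fintype _ _ (fun j => pow_zero _),
    Finsupp.prod_fintype _ _ (fun j => pow_zero _), Fin.prod_univ_succ]
  simp [T_apply]

lemma phi_eq (h : MvPolynomial (Fin (n+1)) k) : phi h =
    AddMonoidAlgebra.ofCoeff (Finsupp.mapDomain T (AddMonoidAlgebra.coeff h)) := by
  induction h using MvPolynomial.induction_on' with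
  | monomial u c =>
    rw [phi_monomial, show (monomial u c : MvPolynomial (Fin (n+1)) k)
      = AddMonoidAlgebra.ofCoeff (Finsupp.single u c)
      from rfl, AddMonoidAlgebra.coeff_ofCoeff, Finsupp.mapDomain_single]
    rfl
  | add p q hp hq => rw [map_add, hp, hq, AddMonoidAlgebra.coeff_add, Finsupp.mapDomain_add,
      AddMonoidAlgebra.ofCoeff_add]

lemma phi_homog (d : ℕ) (f : MvPolynomial (Fin n) k) : phi (homog d f) = f := by
  rw [homog_eq, phi_eq, AddMonoidAlgebra.coeff_ofCoeff, ← Finsupp.mapDomain_comp,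
    show T ∘ S d = (id : (Fin n →₀ ℕ) → _) from funext (T_S d), Finsupp.mapDomain_id,
    AddMonoidAlgebra.ofCoeff_coeff]

lemma degree_eq_sum (u : Fin N →₀ ℕ) : u.degree = u.sum fun _ e => e := by
  rw [Finsupp.degree_apply, Finsupp.sum]

lemma sum_of_mem_support {p : MvPolynomial (Fin N) k} {m : ℕ} (hp : p.IsHomogeneous m)
    {u : Fin N →₀ ℕ} (hu : u ∈ p.support) : (u.sum fun _ e => e) = m := by
  rw [← degree_eq_sum]
  by_contra h
  exact (MvPolynomial.mem_support_iff.mp hu) (hp.coeff_eq_zero h)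

/-- A homogeneous polynomial is the homogenization of its dehomogenization. -/
lemma homog_phi {H : MvPolynomial (Fin (n+1)) k} {m : ℕ} (hH : H.IsHomogeneous m) :
    homog m (phi H) = H := by
  rw [phi_eq, homog_eq, AddMonoidAlgebra.coeff_ofCoeff, ← Finsupp.mapDomain_comp]
  exact (congrArg AddMonoidAlgebra.ofCoeff ((Finsupp.mapDomain_congr (g := id)
    (fun u hu => S_T (sum_of_mem_support hH hu))).trans Finsupp.mapDomain_id)).trans
    (AddMonoidAlgebra.ofCoeff_coeff H)

lemma homog_isHomogeneous {d : ℕ} {f : MvPolynomial (Fin n) k} (h : f.totalDegree ≤ d) :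
    (homog d f).IsHomogeneous d := by
  rw [homog]; unfold Finsupp.sum; beta_reduce
  refine IsHomogeneous.sum _ _ _ fun v hv => isHomogeneous_monomial _ ?_
  have hvd : (v.sum fun _ e => e) ≤ d := le_trans (le_totalDegree hv) h
  rw [degree_eq_sum,
    show ((Finsupp.mapDomain Fin.succ v + Finsupp.single 0 (d - ∑ a ∈ v.support, v a)) = S d v)
      from rfl, sum_split (S d v), T_S, S_apply_zero]
  omega

lemma totalDegree_phi_le {H : MvPolynomial (Fin (n+1)) k} {m : ℕ} (hH : H.IsHomogeneous m) :
    (phi H).totalDegree ≤ m := by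
  rw [phi_eq]
  refine Finset.sup_le fun w hw => ?_
  obtain ⟨u, hu, rfl⟩ := Finset.mem_image.mp (Finsupp.mapDomain_support hw)
  have := sum_split u
  have := sum_of_mem_support hH hu
  omega

lemma homog_zero (d : ℕ) : homog d (0 : MvPolynomial (Fin n) k) = 0 := by
  rw [homog, AddMonoidAlgebra.coeff_zero]; exact Finsupp.sum_zero_index

lemma homog_shift {p : MvPolynomial (Fin n) k} {e : ℕ} (h : p.totalDegree ≤ e) (r : ℕ) :
    homog (e + r) p = X 0 ^ r * homog e p := by
  rw [homog, homog, Finsupp.mul_sum]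
  refine Finsupp.sum_congr fun v hv => ?_
  have hvd : (v.sum fun _ e => e) ≤ e := le_trans (le_totalDegree hv) h
  rw [X_pow_eq_monomial, monomial_mul, one_mul]
  congr 1
  rw [show e + r - (v.sum fun _ e => e) = r + (e - v.sum fun _ e => e) by omega,
    Finsupp.single_add]
  abel_nf

lemma degree_sub_single {v : Fin N →₀ ℕ} {j : Fin N} (h : v j ≠ 0) :
    ((v - Finsupp.single j 1).sum fun _ e => e) = (v.sum fun _ e => e) - 1 := by
  rw [Finsupp.sum_fintype _ _ (fun _ => rfl), Finsupp.sum_fintype _ _ (fun _ => rfl)]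
  simp only [Finsupp.tsub_apply]
  rw [← Finset.add_sum_erase _ (fun i => v i - Finsupp.single j 1 i) (Finset.mem_univ j),
    ← Finset.add_sum_erase _ (fun i => v i) (Finset.mem_univ j)]
  have h1 : ∀ i ∈ Finset.univ.erase j, v i - Finsupp.single j 1 i = v i := by
    intro i hi
    rw [Finsupp.single_apply, if_neg (Finset.ne_of_mem_erase hi).symm, Nat.sub_zero]
  rw [Finset.sum_congr rfl h1, Finsupp.single_apply, if_pos rfl]
  have : (Finset.univ.erase j).sum ⇑v = ∑ x ∈ Finset.univ.erase j, v x := rfl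
  omega

lemma pderiv_sum_rep (j : Fin N) (F : MvPolynomial (Fin N) k) :
    pderiv j F = ∑ v ∈ F.support, monomial (v - Finsupp.single j 1) (coeff v F * v j) := by
  conv_lhs => rw [← F.support_sum_monomial_coeff]
  rw [map_sum]
  exact Finset.sum_congr rfl fun v _ => pderiv_monomial

lemma pderiv_isHomogeneous {F : MvPolynomial (Fin N) k} {d : ℕ} (hF : F.IsHomogeneous d)
    (j : Fin N) : (pderiv j F).IsHomogeneous (d - 1) := by
  rw [pderiv_sum_rep]
  refine IsHomogeneous.sum _ _ _ fun v hv => ?_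
  by_cases hvj : v j = 0
  · rw [hvj]; simp only [Nat.cast_zero, mul_zero, map_zero]; exact isHomogeneous_zero _ _ _
  · refine isHomogeneous_monomial _ ?_
    rw [degree_eq_sum, degree_sub_single hvj, sum_of_mem_support hF hv]

lemma phi_pderiv (j : Fin n) (h : MvPolynomial (Fin (n+1)) k) :
    phi (pderiv j.succ h) = pderiv j (phi h) := by
  induction h using MvPolynomial.induction_on' with
  | monomial u c =>
    rw [pderiv_monomial, phi_monomial, phi_monomial, pderiv_monomial]
    have hT : T (u - Finsupp.single j.succ 1) = T u - Finsupp.single j 1 := by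
      ext i
      rw [T_apply, Finsupp.tsub_apply, Finsupp.tsub_apply, T_apply]
      congr 1
      simp [Finsupp.single_apply, Fin.succ_inj]
    rw [hT, T_apply]
  | add p q hp hq => rw [map_add, map_add, map_add, hp, hq, map_add]

lemma coeff_homog_S (d : ℕ) (f : MvPolynomial (Fin n) k) (v : Fin n →₀ ℕ) :
    coeff (S d v) (homog d f) = coeff v f := by
  rw [homog_eq]
  exact Finsupp.mapDomain_apply (S_injective d) _ v

end St1

namespace St1
variable {k : Type*} [Field k] {n : ℕ}

lemma prime_X0 : Prime (X 0 : MvPolynomial (Fin (n+1)) k) := by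
  rw [← MulEquiv.prime_iff (finSuccEquiv k n).toMulEquiv]
  have : (finSuccEquiv k n).toMulEquiv (X 0) = Polynomial.X := finSuccEquiv_X_zero
  rw [this]
  exact Polynomial.prime_X

lemma not_X0_dvd_homog {f : MvPolynomial (Fin n) k} (hf : f ≠ 0) :
    ¬ (X 0 : MvPolynomial (Fin (n+1)) k) ∣ homog f.totalDegree f := by
  rintro ⟨Q, hQ⟩
  obtain ⟨v, hv, hdeg⟩ : ∃ v ∈ f.support, (v.sum fun _ e => e) = f.totalDegree := by
    obtain ⟨v, hv, h⟩ := Finset.exists_mem_eq_sup f.support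
      (support_nonempty.mpr hf) (fun s => s.sum fun _ e => e)
    exact ⟨v, hv, h.symm⟩
  have hc : coeff (S f.totalDegree v) (homog f.totalDegree f) = coeff v f :=
    coeff_homog_S _ f v
  rw [hQ, mul_comm] at hc
  rw [coeff_mul_X'] at hc
  have h0 : (S f.totalDegree v) 0 = 0 := by rw [S_apply_zero, hdeg]; omega
  rw [if_neg (by simp [Finsupp.mem_support_iff, h0])] at hc
  exact (MvPolynomial.mem_support_iff.mp hv) hc.symm

end St1

namespace St1
variable {k : Type*} [Field k] {n : ℕ}

lemma homog_eq_shift {p : MvPolynomial (Fin n) k} {t e : ℕ} (h : p.totalDegree ≤ t)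
    (hte : t ≤ e) : homog e p = X 0 ^ (e - t) * homog t p := by
  obtain ⟨r, rfl⟩ : ∃ r, e = t + r := ⟨e - t, by omega⟩
  rw [show t + r - t = r by omega]
  exact homog_shift h r

lemma main_aux (f : MvPolynomial (Fin n) k) (P : Fin n → MvPolynomial (Fin n) k)
    (d D : ℕ) (hd : d = f.totalDegree) (hD : ∀ i, (P i).totalDegree ≤ D) :
    (∑ i, P i * pderiv i f) ∈ Ideal.span {f} ↔
      (∑ i : Fin n, homog D (P i) * pderiv i.succ (homog d f))
        ∈ Ideal.span {homog d f} := by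
  have hFhom : (homog d f).IsHomogeneous d := homog_isHomogeneous hd.ge
  have hHhom : (∑ i : Fin n, homog D (P i) * pderiv i.succ (homog d f)).IsHomogeneous
      (D + (d - 1)) := by
    refine IsHomogeneous.sum _ _ _ fun i _ => ?_
    exact (homog_isHomogeneous (hD i)).mul (pderiv_isHomogeneous hFhom i.succ)
  have hphiH : phi (∑ i : Fin n, homog D (P i) * pderiv i.succ (homog d f))
      = ∑ i, P i * pderiv i f := by
    rw [map_sum]
    refine Finset.sum_congr rfl fun i _ => ?_
    rw [map_mul, phi_homog, phi_pderiv, phi_homog]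
  constructor
  · intro hmem
    obtain ⟨g, hg⟩ := Ideal.mem_span_singleton'.mp hmem
    have hphiH2 : phi (∑ i : Fin n, homog D (P i) * pderiv i.succ (homog d f)) = g * f := by
      rw [hphiH, ← hg]
    by_cases hgf : g * f = 0
    · have hz : (∑ i : Fin n, homog D (P i) * pderiv i.succ (homog d f)) = 0 := by
        rw [← homog_phi hHhom, hphiH2, hgf, homog_zero]
      rw [hz]
      exact Ideal.zero_mem _
    · have hfne : f ≠ 0 := fun h => hgf (by rw [h, mul_zero])
      have htm : (g * f).totalDegree ≤ D + (d - 1) := by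
        rw [← hphiH2]; exact totalDegree_phi_le hHhom
      have hGhom : (homog g.totalDegree g * homog d f).IsHomogeneous (g.totalDegree + d) :=
        (homog_isHomogeneous le_rfl).mul hFhom
      have hphiGF : phi (homog g.totalDegree g * homog d f) = g * f := by
        rw [map_mul, phi_homog, phi_homog]
      have htad : (g * f).totalDegree ≤ g.totalDegree + d := by
        rw [← hphiGF]; exact totalDegree_phi_le hGhom
      have hA1 : (∑ i : Fin n, homog D (P i) * pderiv i.succ (homog d f))
          = X 0 ^ (D + (d - 1) - (g * f).totalDegree) * homog (g * f).totalDegree (g * f) := by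
        rw [← homog_phi hHhom, hphiH2]
        exact homog_eq_shift le_rfl htm
      have hA2 : homog g.totalDegree g * homog d f
          = X 0 ^ (g.totalDegree + d - (g * f).totalDegree) * homog (g * f).totalDegree (g * f) := by
        rw [← homog_phi hGhom, hphiGF]
        exact homog_eq_shift le_rfl htad
      have hdvd1 : homog d f ∣ X 0 ^ (g.totalDegree + d - (g * f).totalDegree)
          * homog (g * f).totalDegree (g * f) := hA2 ▸ dvd_mul_left _ _
      have hrel : IsRelPrime (homog d f)
          ((X 0 : MvPolynomial (Fin (n+1)) k) ^ (g.totalDegree + d - (g * f).totalDegree)) :=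
        ((prime_X0.irreducible.isRelPrime_iff_not_dvd.mpr (hd ▸ not_X0_dvd_homog hfne)).symm).pow_right
      have hdvd2 : homog d f ∣ homog (g * f).totalDegree (g * f) :=
        hrel.dvd_of_dvd_mul_left hdvd1
      exact Ideal.mem_span_singleton.mpr (hA1 ▸ Dvd.dvd.mul_left hdvd2 _)
  · intro hmem
    obtain ⟨q, hq⟩ := Ideal.mem_span_singleton'.mp hmem
    refine Ideal.mem_span_singleton'.mpr ⟨phi q, ?_⟩
    rw [← hphiH]
    calc phi q * f = phi q * phi (homog d f) := by rw [phi_homog]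
    _ = phi (q * homog d f) := (map_mul _ _ _).symm
    _ = _ := by rw [hq]

end St1

open St1 in
theorem stmt_1 {k : Type*} [Field k] [CharZero k] {n : ℕ}
    (f : MvPolynomial (Fin n) k) (P : Fin n → MvPolynomial (Fin n) k) :
    (∑ i, P i * pderiv i f) ∈ Ideal.span {f} ↔
      (∑ i : Fin n,
          homog (Finset.univ.sup fun j => (P j).totalDegree) (P i) *
            pderiv i.succ (homog f.totalDegree f))
        ∈ Ideal.span {homog f.totalDegree f} :=
  main_aux f P _ _ rfl fun i =>
    Finset.le_sup (f := fun j => (P j).totalDegree) (Finset.mem_univ i)
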